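/- For any signed measure decomposition, the Coulomb energy splits as H_N^V(X_N) = E(μ∞, V) + F(X_N, μ∞) + Σ_{i=1}^N ζ(x_i), where F is the jellium energy with background μ∞, E(μ,V) is the electrostatic self-energy, and ζ is the effective confining potential. -/

import Mathlib

open MeasureTheory Real Finset
open scoped ENNReal

/-- Electric splitting formula: `H_N^V(X_N) = E(μ∞,V) + F(X_N,μ∞) + ∑ ζ(x_i)`,
where `F` is the jellium energy with background `μ∞` (written in expanded form,
valid since `μ∞` has a Lebesgue density so the diagonal is null),
`E(μ,V)` is the electrostatic self-energy, and `ζ` is the effective confining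
potential. -/
theorem splitting_formula {d N : ℕ} (hd : 2 ≤ d) (hN : 1 ≤ N)
    (g : EuclideanSpace ℝ (Fin d) → ℝ)
    (hg : ∀ x, g x = if d = 2 then -Real.log ‖x‖ else ‖x‖ ^ (-((d : ℝ) - 2)))
    (V : EuclideanSpace ℝ (Fin d) → ℝ)
    (μ : Measure (EuclideanSpace ℝ (Fin d)))
    (c : ℝ)
    (ζ : EuclideanSpace ℝ (Fin d) → ℝ)
    (hζdef : ∀ x, ζ x = (∫ y, g (x - y) ∂μ) + V x - c)
    (hμmass : μ Set.univ = (N : ℝ≥0∞))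
    (hζnonneg : ∀ x, 0 ≤ ζ x)
    (hζsupp : ∀ᵐ x ∂μ, ζ x = 0)
    (hVint : Integrable V μ)
    (hhint : Integrable (fun x => ∫ y, g (x - y) ∂μ) μ)
    (X : Fin N → EuclideanSpace ℝ (Fin d))
    (hXint : ∀ i, Integrable (fun y => g (X i - y)) μ) :
    -- H_N^V(X_N)
    (1 / 2) * (∑ i, ∑ j, if i = j then 0 else g (X i - X j)) + ∑ i, V (X i)
      -- E(μ∞, V)
      = ((1 / 2) * (∫ x, (∫ y, g (x - y) ∂μ) ∂μ) + ∫ x, V x ∂μ)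
        -- F(X_N, μ∞)
        + ((1 / 2) * (∑ i, ∑ j, if i = j then 0 else g (X i - X j))
            - (∑ i, ∫ y, g (X i - y) ∂μ)
            + (1 / 2) * (∫ x, (∫ y, g (x - y) ∂μ) ∂μ))
        -- ∑ ζ(x_i)
        + ∑ i, ζ (X i) := by
  have hfin : IsFiniteMeasure μ := ⟨by rw [hμmass]; exact ENNReal.natCast_lt_top N⟩
  have hmassR : (μ Set.univ).toReal = (N : ℝ) := by rw [hμmass]; simp
  have hzint : ∫ x, ζ x ∂μ = 0 := by
    rw [integral_congr_ae hζsupp]; simp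
  have key : (∫ x, (∫ y, g (x - y) ∂μ) ∂μ) + (∫ x, V x ∂μ) - c * N = 0 := by
    have : ∫ x, ζ x ∂μ = (∫ x, (∫ y, g (x - y) ∂μ) ∂μ) + (∫ x, V x ∂μ) - c * N := by
      have h1 : ζ = fun x => (∫ y, g (x - y) ∂μ) + V x - c := funext hζdef
      simp only [h1]
      rw [integral_sub (by exact hhint.add hVint) (integrable_const c),
        integral_add hhint hVint, integral_const, measureReal_def, hmassR]
      simp [smul_eq_mul]; ring
    linarith [this.symm.trans hzint]
  have hsum : ∑ i, ζ (X i)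
      = (∑ i, ∫ y, g (X i - y) ∂μ) + (∑ i, V (X i)) - c * N := by
    simp only [hζdef]
    rw [Finset.sum_sub_distrib, Finset.sum_add_distrib, Finset.sum_const]
    simp [mul_comm]
  rw [hsum]
  linarith [key]
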